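/- For natural numbers m ≠ n, ∫_{−∞}^{∞} H_m(x) H_n(x) e^{−x²} dx = 0, where H_k denotes the physicists' Hermite polynomial. That is, the physicists' Hermite polynomials are pairwise orthogonal on ℝ with respect to the weight function ω(x) = e^{−x²}. -/

import Mathlib

open Real MeasureTheory Finset Nat

/-- The physicists' Hermite polynomial, given by the explicit formula
`H n x = n! ∑_{k=0}^{⌊n/2⌋} (-1)^k (2x)^(n-2k) / (k! (n-2k)!)`. -/
noncomputable def physHermite (n : ℕ) (x : ℝ) : ℝ :=
  (n ! : ℝ) * ∑ k ∈ Finset.range (n / 2 + 1),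
    (-1 : ℝ) ^ k * (2 * x) ^ (n - 2 * k) / ((k ! : ℝ) * ((n - 2 * k)! : ℝ))

noncomputable def Q : ℕ → Polynomial ℝ
  | 0 => 1
  | n + 1 => 2 * Polynomial.X * Q n - Polynomial.derivative (Q n)

lemma Q_natDegree_le (n : ℕ) : (Q n).natDegree ≤ n := by
  induction n with
  | zero => simp [Q]
  | succ n ih =>
    rw [Q]
    refine le_trans (Polynomial.natDegree_sub_le _ _) (max_le ?_ ?_)
    · refine le_trans (Polynomial.natDegree_mul_le) ?_
      have : (2 * Polynomial.X : Polynomial ℝ).natDegree ≤ 1 := by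
        refine le_trans (Polynomial.natDegree_mul_le) ?_
        simp
      omega
    · have := Polynomial.natDegree_derivative_le (Q n)
      omega

noncomputable def physHermiteDeriv (n : ℕ) (x : ℝ) : ℝ :=
  (n ! : ℝ) * ∑ k ∈ Finset.range (n / 2 + 1),
    (-1 : ℝ) ^ k * (((n - 2 * k : ℕ) : ℝ) * (2 * x) ^ (n - 2 * k - 1) * 2) /
      ((k ! : ℝ) * ((n - 2 * k)! : ℝ))

lemma hasDerivAt_physHermite (n : ℕ) (x : ℝ) :
    HasDerivAt (physHermite n) (physHermiteDeriv n x) x := by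
  unfold physHermite physHermiteDeriv
  refine HasDerivAt.const_mul _ ?_
  refine HasDerivAt.fun_sum fun k _ => ?_
  have h2x : HasDerivAt (fun y : ℝ => 2 * y) 2 x := by
    simpa using (hasDerivAt_id x).const_mul 2
  have h := ((h2x.fun_pow (n - 2 * k)).div_const ((k ! : ℝ) * ((n - 2 * k)! : ℝ))).const_mul
    ((-1 : ℝ) ^ k)
  have hfun : (fun y : ℝ => (-1 : ℝ) ^ k * (2 * y) ^ (n - 2 * k) / ((k ! : ℝ) * ((n - 2 * k)! : ℝ)))
      = fun y : ℝ => (-1 : ℝ) ^ k * ((2 * y) ^ (n - 2 * k) / ((k ! : ℝ) * ((n - 2 * k)! : ℝ))) := by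
    funext y; ring
  rw [hfun]
  refine h.congr_deriv ?_
  ring

lemma physHermite_padded (n : ℕ) (x : ℝ) :
    physHermite n x = (n ! : ℝ) * ∑ k ∈ Finset.range (n + 1),
      (if 2 * k ≤ n then (-1 : ℝ) ^ k * (2 * x) ^ (n - 2 * k) / ((k ! : ℝ) * ((n - 2 * k)! : ℝ))
       else 0) := by
  unfold physHermite
  congr 1
  rw [← Finset.sum_subset (Finset.range_subset_range.2 (by omega : n / 2 + 1 ≤ n + 1))
    (fun k _ hk => by rw [if_neg]; simp at hk; omega)]
  exact Finset.sum_congr rfl fun k hk => by rw [if_pos]; simp at hk; omega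

lemma physHermiteDeriv_padded (n : ℕ) (x : ℝ) :
    physHermiteDeriv n x = (n ! : ℝ) * ∑ k ∈ Finset.range (n + 1),
      (if 2 * k ≤ n then
        (-1 : ℝ) ^ k * (((n - 2 * k : ℕ) : ℝ) * (2 * x) ^ (n - 2 * k - 1) * 2) /
          ((k ! : ℝ) * ((n - 2 * k)! : ℝ))
       else 0) := by
  unfold physHermiteDeriv
  congr 1
  rw [← Finset.sum_subset (Finset.range_subset_range.2 (by omega : n / 2 + 1 ≤ n + 1))
    (fun k _ hk => by rw [if_neg]; simp at hk; omega)]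
  exact Finset.sum_congr rfl fun k hk => by rw [if_pos]; simp at hk; omega

lemma key_term (n k : ℕ) (x : ℝ) :
    ((n + 1)! : ℝ) * (if 2 * k ≤ n + 1 then
        (-1 : ℝ) ^ k * (2 * x) ^ (n + 1 - 2 * k) / ((k ! : ℝ) * ((n + 1 - 2 * k)! : ℝ)) else 0)
    = 2 * x * ((n ! : ℝ) * (if 2 * k ≤ n then
        (-1 : ℝ) ^ k * (2 * x) ^ (n - 2 * k) / ((k ! : ℝ) * ((n - 2 * k)! : ℝ)) else 0))
      - (n ! : ℝ) * (if k = 0 then 0 else if 2 * (k - 1) ≤ n then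
        (-1 : ℝ) ^ (k - 1) * (((n - 2 * (k - 1) : ℕ) : ℝ) * (2 * x) ^ (n - 2 * (k - 1) - 1) * 2) /
          (((k - 1)! : ℝ) * ((n - 2 * (k - 1))! : ℝ)) else 0) := by
  match k with
  | 0 =>
    simp only [if_pos (by omega : 2 * 0 ≤ n + 1), if_pos (by omega : 2 * 0 ≤ n), if_pos rfl]
    simp only [Nat.mul_zero, Nat.sub_zero, pow_zero, one_mul, Nat.factorial_zero]
    rw [Nat.factorial_succ, pow_succ]
    push_cast
    have h1 : (n ! : ℝ) ≠ 0 := Nat.cast_ne_zero.2 n.factorial_ne_zero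
    field_simp
    ring
  | j + 1 =>
    rcases le_or_gt (2 * (j + 1)) n with h1 | h1
    · obtain ⟨d, rfl⟩ : ∃ d, n = 2 * j + 2 + d := ⟨n - (2 * j + 2), by omega⟩
      rw [if_pos (by omega), if_pos (by omega), if_neg (by omega), if_pos (by omega)]
      simp only [Nat.add_sub_cancel]
      rw [show 2 * j + 2 + d + 1 - 2 * (j + 1) = d + 1 from by omega,
        show 2 * j + 2 + d - 2 * (j + 1) = d from by omega,
        show 2 * j + 2 + d - 2 * j = d + 2 from by omega,
        show d + 2 - 1 = d + 1 from by omega]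
      rw [show (2 * j + 2 + d + 1)! = (2 * j + 2 + d + 1) * (2 * j + 2 + d)! from
        Nat.factorial_succ _,
        show (d + 2)! = (d + 2) * ((d + 1) * d !) from by
          rw [Nat.factorial_succ, Nat.factorial_succ],
        show (d + 1)! = (d + 1) * d ! from Nat.factorial_succ _,
        show (j + 1)! = (j + 1) * j ! from Nat.factorial_succ _]
      have hj : (j ! : ℝ) ≠ 0 := Nat.cast_ne_zero.2 j.factorial_ne_zero
      have hd : (d ! : ℝ) ≠ 0 := Nat.cast_ne_zero.2 d.factorial_ne_zero
      have hN : ((2 * j + 2 + d)! : ℝ) ≠ 0 := Nat.cast_ne_zero.2 (Nat.factorial_ne_zero _)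
      rw [pow_succ (2 * x) d, pow_succ (-1 : ℝ) j]
      push_cast
      field_simp
      ring
    · rcases le_or_gt (2 * (j + 1)) (n + 1) with h2 | h2
      · have hn : n = 2 * j + 1 := by omega
        subst hn
        simp only [Nat.add_sub_cancel, if_neg (Nat.succ_ne_zero j)]
        rw [if_pos (show 2 * (j + 1) ≤ 2 * j + 1 + 1 by omega),
          if_neg (show ¬2 * (j + 1) ≤ 2 * j + 1 by omega),
          if_pos (show 2 * j ≤ 2 * j + 1 by omega)]
        rw [show 2 * j + 1 + 1 - 2 * (j + 1) = 0 from by omega,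
          show 2 * j + 1 - 2 * j = 1 from by omega]
        norm_num
        rw [show (2 * j + 1 + 1)! = (2 * j + 2) * ((2 * j + 1)!) from Nat.factorial_succ _,
          show (j + 1)! = (j + 1) * j ! from Nat.factorial_succ _]
        have hj : (j ! : ℝ) ≠ 0 := Nat.cast_ne_zero.2 j.factorial_ne_zero
        have hN : ((2 * j + 1)! : ℝ) ≠ 0 := Nat.cast_ne_zero.2 (Nat.factorial_ne_zero _)
        rw [pow_succ (-1 : ℝ) j]
        push_cast
        field_simp
      · simp only [Nat.add_sub_cancel, if_neg (Nat.succ_ne_zero j)]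
        rw [if_neg (show ¬2 * (j + 1) ≤ n + 1 by omega),
          if_neg (show ¬2 * (j + 1) ≤ n by omega)]
        rcases le_or_gt (2 * j) n with h3 | h3
        · have hn : n = 2 * j := by omega
          subst hn
          rw [if_pos (show 2 * j ≤ 2 * j from le_refl _)]
          simp
        · rw [if_neg (show ¬2 * j ≤ n by omega)]
          simp

lemma physHermite_succ (n : ℕ) (x : ℝ) :
    physHermite (n + 1) x = 2 * x * physHermite n x - physHermiteDeriv n x := by
  rw [physHermite_padded, physHermite_padded, physHermiteDeriv_padded, Finset.mul_sum,
    Finset.sum_congr rfl (fun k _ => key_term n k x), Finset.sum_sub_distrib,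
    ← Finset.mul_sum, ← Finset.mul_sum, ← Finset.mul_sum]
  congr 2
  · rw [Finset.sum_range_succ, if_neg (by omega), add_zero]
  · rw [Finset.sum_range_succ']
    simp only [Nat.succ_ne_zero, if_false, Nat.add_sub_cancel, if_neg (Nat.succ_ne_zero 0)]
    simp

lemma eval_Q (n : ℕ) : ∀ x : ℝ, (Q n).eval x = physHermite n x := by
  induction n with
  | zero => intro x; simp [Q, physHermite]
  | succ n ih =>
    intro x
    have hfun : (fun y => (Q n).eval y) = physHermite n := funext ih
    have h1 : (Polynomial.derivative (Q n)).eval x = physHermiteDeriv n x := by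
      have hD := (Q n).hasDerivAt x
      rw [hfun] at hD
      exact hD.unique (hasDerivAt_physHermite n x)
    rw [physHermite_succ, Q]
    simp only [Polynomial.eval_sub, Polynomial.eval_mul, Polynomial.eval_ofNat,
      Polynomial.eval_X]
    rw [ih x, h1]

lemma integrable_pow_gauss (k : ℕ) : Integrable fun x : ℝ => x ^ k * Real.exp (-x ^ 2) := by
  have h := integrable_rpow_mul_exp_neg_mul_sq (b := 1) one_pos
    (s := (k : ℝ)) (lt_of_lt_of_le (by norm_num) (Nat.cast_nonneg k))
  simpa [Real.rpow_natCast] using h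

lemma integrable_poly_gauss (p : Polynomial ℝ) :
    Integrable fun x : ℝ => p.eval x * Real.exp (-x ^ 2) := by
  have h : (fun x : ℝ => p.eval x * Real.exp (-x ^ 2)) =
      fun x => ∑ k ∈ Finset.range (p.natDegree + 1),
        p.coeff k * (x ^ k * Real.exp (-x ^ 2)) := by
    funext x
    rw [Polynomial.eval_eq_sum_range, Finset.sum_mul]
    exact Finset.sum_congr rfl fun k _ => by ring
  rw [h]
  exact integrable_finset_sum _ fun k _ => (integrable_pow_gauss k).const_mul _

lemma integrable_poly_poly_gauss (q r : Polynomial ℝ) :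
    Integrable fun x : ℝ => q.eval x * (r.eval x * Real.exp (-x ^ 2)) := by
  have := integrable_poly_gauss (q * r)
  simpa [Polynomial.eval_mul, mul_assoc] using this

lemma G_hasDerivAt (n : ℕ) (x : ℝ) :
    HasDerivAt (fun y => (Q n).eval y * Real.exp (-y ^ 2))
      (-((Q (n + 1)).eval x * Real.exp (-x ^ 2))) x := by
  have hp := (Q n).hasDerivAt x
  have h1 : HasDerivAt (fun y : ℝ => -y ^ 2) (-(2 * x)) x := by
    simpa using (hasDerivAt_pow 2 x).fun_neg
  have he := h1.exp
  have := hp.fun_mul he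
  refine this.congr_deriv ?_
  rw [Q]
  simp only [Polynomial.eval_sub, Polynomial.eval_mul, Polynomial.eval_ofNat, Polynomial.eval_X]
  ring

lemma integral_poly_Q_zero (n : ℕ) : ∀ p : Polynomial ℝ, p.natDegree < n →
    ∫ x : ℝ, p.eval x * ((Q n).eval x * Real.exp (-x ^ 2)) = 0 := by
  induction n with
  | zero => intro p hp; omega
  | succ n ih =>
    intro p hp
    have hparts := MeasureTheory.integral_mul_deriv_eq_deriv_mul_of_integrable
      (u := fun x => p.eval x) (u' := fun x => (Polynomial.derivative p).eval x)
      (v := fun x => (Q n).eval x * Real.exp (-x ^ 2))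
      (v' := fun x => -((Q (n + 1)).eval x * Real.exp (-x ^ 2)))
      (fun x _ => p.hasDerivAt x) (fun x _ => G_hasDerivAt n x)
      ((integrable_poly_poly_gauss p (Q (n + 1))).neg.congr
        (Filter.EventuallyEq.of_eq (funext fun x => by simp only [Pi.neg_apply, Pi.mul_apply]; ring)))
      (integrable_poly_poly_gauss (Polynomial.derivative p) (Q n))
      (integrable_poly_poly_gauss p (Q n))
    have h1 : ∫ x : ℝ, p.eval x * ((Q (n + 1)).eval x * Real.exp (-x ^ 2)) =
        -∫ x : ℝ, p.eval x * -((Q (n + 1)).eval x * Real.exp (-x ^ 2)) := by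
      rw [← MeasureTheory.integral_neg]
      congr 1
      funext x
      ring
    rw [h1, hparts, neg_neg]
    rcases eq_or_ne (Polynomial.derivative p) 0 with h0 | h0
    · simp [h0]
    · have hd0 : p.natDegree ≠ 0 := fun h => h0 (by
        rcases Polynomial.natDegree_eq_zero.1 h with ⟨a, rfl⟩; simp)
      have := Polynomial.natDegree_derivative_lt hd0
      exact ih _ (by omega)

/-- The physicists' Hermite polynomials are pairwise orthogonal on `ℝ` with respect
to the weight function `exp (-x²)`. -/
theorem physHermite_orthogonal (m n : ℕ) (hmn : m ≠ n) :
    ∫ x : ℝ, physHermite m x * physHermite n x * Real.exp (-x ^ 2) = 0 := by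
  wlog h : m < n generalizing m n
  · have := this n m hmn.symm (by omega)
    rw [← this]
    congr 1
    funext x
    ring
  have h0 := integral_poly_Q_zero n (Q m) (lt_of_le_of_lt (Q_natDegree_le m) h)
  rw [← h0]
  congr 1
  funext x
  rw [eval_Q m x, eval_Q n x]
  ring
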